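/- Let α be irrational with continued fraction denominators (q_n), let θx = x + α mod 1 on [0,1) with Lebesgue measure, and Tf = f∘θ. Define h = ∑_{n=1}^∞ n^{-2} q_n 1_{[0, 2/q_n]}. Then h ∈ L¹([0,1)) and for every 0<r<1, limsup_n T^n h(x)/n^r = ∞ for a.e. x. -/

import Mathlib

open MeasureTheory Filter Topology ENNReal GenContFract

section CF
variable {α : ℝ} (hα : Irrational α)
include hα

/-- the stream never terminates for an irrational number -/
lemma s7_stream_ne_none (n : ℕ) : IntFractPair.stream α n ≠ none := by
  intro hn
  have hterm : (GenContFract.of α).Terminates := by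
    cases n with
    | zero => rw [IntFractPair.stream_zero] at hn; exact absurd hn (by simp)
    | succ m =>
      exact ⟨m, (of_terminatedAt_n_iff_succ_nth_intFractPair_stream_eq_none).2 hn⟩
  obtain ⟨q, hq⟩ := (GenContFract.terminates_iff_rat α).1 hterm
  exact hα ⟨q, hq.symm⟩

/-- fractional parts along the stream -/
noncomputable def s7fr (α : ℝ) (n : ℕ) : ℝ :=
  ((IntFractPair.stream α n).map IntFractPair.fr).getD 0

lemma s7_stream_eq (n : ℕ) :
    IntFractPair.stream α n = some ⟨((IntFractPair.stream α n).map IntFractPair.b).getD 0, s7fr α n⟩ := by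
  obtain ⟨p, hp⟩ := Option.ne_none_iff_exists'.1 (s7_stream_ne_none hα n)
  rw [hp]; simp [s7fr, hp]

lemma s7fr_ne_zero (n : ℕ) : s7fr α n ≠ 0 := by
  intro h0
  have := IntFractPair.stream_eq_none_of_fr_eq_zero (s7_stream_eq hα n) h0
  exact s7_stream_ne_none hα (n+1) this

omit hα in lemma s7fr_zero : s7fr α 0 = Int.fract α := by
  simp [s7fr, IntFractPair.stream_zero, IntFractPair.of]

lemma s7fr_succ (n : ℕ) : s7fr α (n+1) = Int.fract (s7fr α n)⁻¹ := by
  have h := IntFractPair.stream_succ_of_some (s7_stream_eq hα n) (s7fr_ne_zero hα n)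
  simp only [s7fr, h]
  rfl

lemma s7fr_pos (n : ℕ) : 0 < s7fr α n := by
  rcases (IntFractPair.nth_stream_fr_nonneg (s7_stream_eq hα n)).lt_or_eq with h | h
  · exact h
  · exact absurd h.symm (s7fr_ne_zero hα n)

lemma s7fr_lt_one (n : ℕ) : s7fr α n < 1 :=
  IntFractPair.nth_stream_fr_lt_one (s7_stream_eq hα n)

/-- partial denominators -/
noncomputable def s7b (α : ℝ) (n : ℕ) : ℤ := ⌊(s7fr α n)⁻¹⌋

lemma s7_one_le_b (n : ℕ) : 1 ≤ s7b α n := by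
  have h1 : 1 < (s7fr α n)⁻¹ := (one_lt_inv₀ (s7fr_pos hα n)).2 (s7fr_lt_one hα n)
  exact Int.le_floor.2 (by exact_mod_cast h1.le)

lemma s7_s_get (n : ℕ) : (GenContFract.of α).s.get? n = some ⟨1, (s7b α n : ℝ)⟩ := by
  have h := IntFractPair.stream_succ_of_some (s7_stream_eq hα n) (s7fr_ne_zero hα n)
  have h2 := get?_of_eq_some_of_succ_get?_intFractPair_stream h
  rw [h2]
  rfl


/-- shifted denominators -/
noncomputable def s7Q (α : ℝ) : ℕ → ℕ
  | 0 => 0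
  | 1 => 1
  | (n+2) => (s7b α n).toNat * s7Q α (n+1) + s7Q α n

/-- products of fractional parts: `s7P α n = |q_{n-1} α - p_{n-1}|` -/
noncomputable def s7P (α : ℝ) (n : ℕ) : ℝ := ∏ i ∈ Finset.range n, s7fr α i

include hα

lemma s7b_toNat_cast (n : ℕ) : (((s7b α n).toNat : ℤ) : ℝ) = ((s7b α n : ℤ) : ℝ) := by
  rw [Int.toNat_of_nonneg (le_trans zero_le_one (s7_one_le_b hα n))]

lemma s7Q_rec_real (n : ℕ) :
    ((s7Q α (n+2) : ℕ) : ℝ) = (s7b α n : ℝ) * (s7Q α (n+1) : ℕ) + (s7Q α n : ℕ) := by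
  show (((s7b α n).toNat * s7Q α (n+1) + s7Q α n : ℕ) : ℝ) = _
  push_cast
  rw [← s7b_toNat_cast hα n]
  push_cast
  ring

lemma s7Q_cast (n : ℕ) : ((s7Q α (n+1) : ℕ) : ℝ) = (GenContFract.of α).dens n := by
  induction n using Nat.twoStepInduction with
  | zero => simp [s7Q, zeroth_den_eq_one]
  | one =>
    have h1 : (GenContFract.of α).conts 1 =
        ⟨(s7b α 0 : ℝ) * (GenContFract.of α).h + 1, (s7b α 0 : ℝ)⟩ :=
      first_cont_eq (s7_s_get hα 0)
    have h2 : (GenContFract.of α).dens 1 = (s7b α 0 : ℝ) := by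
      rw [den_eq_conts_b, h1]
    rw [h2, s7Q_rec_real hα 0]
    simp [s7Q]
  | more n ih1 ih2 =>
    have hrec := dens_recurrence (g := GenContFract.of α) (s7_s_get hα (n+1)) rfl rfl
    rw [s7Q_rec_real hα (n+1), ih1, ih2, hrec]
    push_cast
    ring

omit hα in lemma s7P_zero : s7P α 0 = 1 := by simp [s7P]

omit hα in lemma s7P_succ (n : ℕ) : s7P α (n+1) = s7P α n * s7fr α n := Finset.prod_range_succ _ _

lemma s7P_pos (n : ℕ) : 0 < s7P α n :=
  Finset.prod_pos fun i _ => s7fr_pos hα i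

lemma s7P_le_one (n : ℕ) : s7P α n ≤ 1 :=
  Finset.prod_le_one (fun i _ => (s7fr_pos hα i).le) (fun i _ => (s7fr_lt_one hα i).le)

lemma s7P_succ_lt_one (n : ℕ) : s7P α (n+1) < 1 := by
  rw [s7P_succ]
  calc s7P α n * s7fr α n ≤ 1 * s7fr α n := by
        exact mul_le_mul_of_nonneg_right (s7P_le_one hα n) (s7fr_pos hα n).le
    _ < 1 := by rw [one_mul]; exact s7fr_lt_one hα n

lemma s7P_rec (n : ℕ) : s7P α (n+2) = s7P α n - (s7b α n : ℝ) * s7P α (n+1) := by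
  have hfr := s7fr_pos hα n
  have h1 : s7P α (n+1) * (s7fr α n)⁻¹ = s7P α n := by
    rw [s7P_succ, mul_assoc, mul_inv_cancel₀ hfr.ne', mul_one]
  rw [s7P_succ, s7fr_succ hα n, Int.fract]
  show s7P α (n+1) * ((s7fr α n)⁻¹ - (s7b α n : ℝ)) = _
  rw [mul_sub, h1]; ring

/-- the exact sign formula: `Q n * α - (integer) = (-1)^(n+1) * P n` -/
lemma s7_delta (n : ℕ) : ∃ m : ℤ, ((s7Q α n : ℕ) : ℝ) * α = (-1)^(n+1) * s7P α n + m := by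
  induction n using Nat.twoStepInduction with
  | zero => exact ⟨1, by simp [s7Q, s7P_zero]⟩
  | one =>
    refine ⟨⌊α⌋, ?_⟩
    have : s7P α 1 = Int.fract α := by
      rw [show (1:ℕ) = 0 + 1 from rfl, s7P_succ, s7P_zero, one_mul, s7fr_zero]
    have hQ1 : s7Q α 1 = 1 := rfl
    rw [hQ1, this, Int.fract]
    push_cast
    ring
  | more n ih1 ih2 =>
    obtain ⟨m0, h0⟩ := ih1
    obtain ⟨m1, h1⟩ := ih2
    refine ⟨s7b α n * m1 + m0, ?_⟩
    rw [s7Q_rec_real hα n, add_mul, mul_assoc, h0, h1, s7P_rec hα n]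
    have e2 : ((-1:ℝ))^(n+1+1+1) = (-1)^(n+1) := by
      rw [pow_succ, pow_succ]; ring
    have e3 : ((-1:ℝ))^(n+1+1) = -(-1)^(n+1) := by rw [pow_succ]; ring
    rw [e2, e3]
    push_cast
    ring

/-- the classical identity `P n * Q (n+1) + P (n+1) * Q n = 1` -/
lemma s7_PQ (n : ℕ) : s7P α n * (s7Q α (n+1) : ℕ) + s7P α (n+1) * (s7Q α n : ℕ) = 1 := by
  induction n with
  | zero => simp [s7Q, s7P_zero]
  | succ n ih =>
    rw [s7Q_rec_real hα n, s7P_rec hα n]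
    nlinarith [ih]

lemma s7Q_mono (n : ℕ) : s7Q α n ≤ s7Q α (n+1) := by
  cases n with
  | zero => simp [s7Q]
  | succ n =>
    show s7Q α (n+1) ≤ (s7b α n).toNat * s7Q α (n+2-1) + s7Q α n
    have hb : 1 ≤ (s7b α n).toNat := by
      have := s7_one_le_b hα n; omega
    calc s7Q α (n+1) = 1 * s7Q α (n+1) := (one_mul _).symm
      _ ≤ (s7b α n).toNat * s7Q α (n+1) + s7Q α n := by
          exact le_add_of_le_of_nonneg (Nat.mul_le_mul_right _ hb) (Nat.zero_le _)

lemma s7Q_one_le (n : ℕ) : 1 ≤ s7Q α (n+1) := by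
  induction n with
  | zero => simp [s7Q]
  | succ n ih => exact le_trans ih (s7Q_mono hα (n+1))

lemma s7Q_two_steps (n : ℕ) : 2 * s7Q α n ≤ s7Q α (n+2) := by
  show 2 * s7Q α n ≤ (s7b α n).toNat * s7Q α (n+1) + s7Q α n
  have hb : 1 ≤ (s7b α n).toNat := by have := s7_one_le_b hα n; omega
  have h1 : s7Q α n ≤ (s7b α n).toNat * s7Q α (n+1) :=
    le_trans (s7Q_mono hα n) (Nat.le_mul_of_pos_left _ hb)
  omega

lemma s7Q_growth (k : ℕ) : 2^k ≤ s7Q α (2*k+1) := by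
  induction k with
  | zero => simp [s7Q]
  | succ k ih =>
    calc 2^(k+1) = 2 * 2^k := by ring
      _ ≤ 2 * s7Q α (2*k+1) := by omega
      _ ≤ s7Q α (2*k+1+2) := s7Q_two_steps hα _
      _ = s7Q α (2*(k+1)+1) := by ring_nf




lemma s7_key (n : ℕ) : ∀ x : ℝ, 0 ≤ x → x < 1 →
    ∃ (k : ℕ) (m : ℤ), k ≤ s7Q α n + s7Q α (n+1) ∧
      0 ≤ x + k*α - m ∧ x + k*α - m < 1 ∧ x + k*α - m < s7P α n + s7P α (n+1) := by
  classical
  induction n with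
  | zero =>
    intro x hx0 hx1
    refine ⟨0, 0, by simp, by simpa, by simpa, ?_⟩
    have h1 : (1:ℝ) ≤ s7P α 0 + s7P α 1 := by
      have := s7P_pos hα 1
      have h0 : s7P α 0 = 1 := by simp [s7P]
      linarith
    push_cast
    linarith
  | succ n ih =>
    intro x hx0 hx1
    obtain ⟨k', m', hk', h0, h1, h2⟩ := ih x hx0 hx1
    set y := x + k'*α - m' with hy_def
    set β := s7P α (n+1) with hβ_def
    set γ := s7P α n with hγ_def
    set ε := s7P α (n+2) with hε_def
    have hβ : 0 < β := s7P_pos hα (n+1)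
    have hε : 0 < ε := s7P_pos hα (n+2)
    have hrec : ε = γ - (s7b α n : ℝ) * β := s7P_rec hα n
    set bN := (s7b α n).toNat with hbN_def
    have hbN1 : 1 ≤ bN := by have := s7_one_le_b hα n; omega
    have hbcast : ((bN : ℕ) : ℝ) = ((s7b α n : ℤ) : ℝ) := by
      rw [hbN_def]; exact_mod_cast s7b_toNat_cast hα n
    obtain ⟨mδ, hmδ⟩ := s7_delta hα (n+1)
    have hQrec : s7Q α (n+1+1) = bN * s7Q α (n+1) + s7Q α n := rfl
    rcases Nat.even_or_odd n with he | ho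
    · -- n even : Q(n+1)α = β + mδ ; Q n α = -γ + mγ
      have hsign : ((-1:ℝ))^(n+1+1) = 1 := Even.neg_one_pow (by obtain ⟨c, hc⟩ := he; exact ⟨c+1, by omega⟩)
      rw [hsign, one_mul] at hmδ
      by_cases hy : y < β + ε
      · refine ⟨k', m', ?_, h0, h1, hy⟩
        have := s7Q_mono hα n
        have h2 : s7Q α n ≤ s7Q α (n+2) := le_trans this (s7Q_mono hα (n+1))
        omega
      · push_neg at hy
        obtain ⟨mγ, hmγ⟩ := s7_delta hα n
        have hsign2 : ((-1:ℝ))^(n+1) = -1 := Odd.neg_one_pow (by obtain ⟨c, hc⟩ := he; exact ⟨c, by omega⟩)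
        rw [hsign2] at hmγ
        have hwit : γ ≤ y + ((bN - 1 : ℕ) : ℝ) * β := by
          rw [Nat.cast_sub hbN1, hbcast]
          push_cast
          nlinarith
        set P : ℕ → Prop := fun i => γ ≤ y + (i : ℝ) * β with hP_def
        have hPwit : P (bN - 1) := hwit
        set i := Nat.find ⟨bN - 1, hPwit⟩ with hi_def
        have hspec : γ ≤ y + (i : ℝ) * β := Nat.find_spec ⟨bN - 1, hPwit⟩
        have hile : i ≤ bN - 1 := Nat.find_min' _ hPwit
        refine ⟨k' + i * s7Q α (n+1) + s7Q α n, m' + i * mδ + mγ, ?_, ?_, ?_, ?_⟩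
        · have h3 : i * s7Q α (n+1) ≤ (bN - 1) * s7Q α (n+1) :=
            Nat.mul_le_mul_right _ hile
          have h4 := s7Q_mono hα n
          have : (bN - 1) * s7Q α (n+1) + s7Q α (n+1) = bN * s7Q α (n+1) := by
            have : bN - 1 + 1 = bN := by omega
            calc (bN - 1) * s7Q α (n+1) + s7Q α (n+1) = (bN - 1 + 1) * s7Q α (n+1) := by ring
              _ = bN * s7Q α (n+1) := by rw [‹bN - 1 + 1 = bN›]
          omega
        all_goals {
          have hval : x + ((k' + i * s7Q α (n+1) + s7Q α n : ℕ) : ℝ)*α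
              - ((m' + i * mδ + mγ : ℤ) : ℝ) = y + (i:ℝ) * β - γ := by
            push_cast
            linear_combination (i:ℝ) * hmδ + hmγ
          rw [hval]
          first
          | linarith
          | { -- the strict upper bounds : value < β
              have hub : y + (i:ℝ) * β - γ < β := by
                rcases Nat.eq_zero_or_pos i with hi0 | hi0
                · rw [hi0]; push_cast; linarith
                · have hmin : ¬ P (i - 1) := Nat.find_min _ (by omega)
                  have : y + ((i - 1 : ℕ) : ℝ) * β < γ := lt_of_not_ge hmin
                  have hcast : ((i - 1 : ℕ) : ℝ) = (i:ℝ) - 1 := by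
                    rw [Nat.cast_sub hi0]; norm_num
                  rw [hcast] at this
                  linarith
              have hβ1 : β < 1 := s7P_succ_lt_one hα n
              first
              | linarith
              | { show _ < s7P α (n+1) + s7P α (n+2); linarith } }
        }
    · -- n odd : Q(n+1)α = -β + mδ
      have hsign : ((-1:ℝ))^(n+1+1) = -1 := Odd.neg_one_pow (by obtain ⟨c, hc⟩ := ho; exact ⟨c+1, by omega⟩)
      rw [hsign] at hmδ
      have hwit : y - ((bN : ℕ) : ℝ) * β < β + ε := by rw [hbcast]; push_cast; nlinarith
      set P : ℕ → Prop := fun j => y - (j : ℝ) * β < β + ε with hP_def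
      have hPwit : P bN := hwit
      set j := Nat.find ⟨bN, hPwit⟩ with hj_def
      have hspec : y - (j : ℝ) * β < β + ε := Nat.find_spec ⟨bN, hPwit⟩
      have hjle : j ≤ bN := Nat.find_min' _ hPwit
      refine ⟨k' + j * s7Q α (n+1), m' + j * mδ, ?_, ?_, ?_, ?_⟩
      · have h3 : j * s7Q α (n+1) ≤ bN * s7Q α (n+1) := Nat.mul_le_mul_right _ hjle
        omega
      all_goals {
        have hval : x + ((k' + j * s7Q α (n+1) : ℕ) : ℝ)*α
            - ((m' + j * mδ : ℤ) : ℝ) = y - (j:ℝ) * β := by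
          push_cast
          linear_combination (j:ℝ) * hmδ
        rw [hval]
        first
        | { -- nonneg
            rcases Nat.eq_zero_or_pos j with hj0 | hj0
            · rw [hj0]; push_cast; linarith
            · have hmin : ¬ P (j - 1) := Nat.find_min _ (by omega)
              have : β + ε ≤ y - ((j - 1 : ℕ) : ℝ) * β := le_of_not_gt hmin
              have hcast : ((j - 1 : ℕ) : ℝ) = (j:ℝ) - 1 := by
                rw [Nat.cast_sub hj0]; norm_num
              rw [hcast] at this
              linarith }
        | { have hjβ : 0 ≤ (j:ℝ) * β := by positivity
            first
            | linarith
            | { show _ < s7P α (n+1) + s7P α (n+2); linarith } }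
      }

lemma s7_key' (n : ℕ) (x : ℝ) (hx0 : 0 ≤ x) (hx1 : x < 1) :
    ∃ k : ℕ, (k:ℝ) ≤ 2 * (GenContFract.of α).dens (n+1) ∧
      Int.fract (x + k*α) ≤ 2 / (GenContFract.of α).dens (n+1) := by
  obtain ⟨k, m, hk, h0, h1, h2⟩ := s7_key hα (n+1) x hx0 hx1
  have hQ2pos : (0:ℝ) < (s7Q α (n+2) : ℕ) := by exact_mod_cast s7Q_one_le hα (n+1)
  have hPle : s7P α (n+1) ≤ 1 / (s7Q α (n+2) : ℕ) := by
    have hPQ := s7_PQ hα (n+1)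
    have h3 : 0 ≤ s7P α (n+2) * (s7Q α (n+1) : ℕ) := by
      have := s7P_pos hα (n+2); positivity
    rw [le_div_iff₀ hQ2pos]
    linarith
  have hPmono : s7P α (n+2) ≤ s7P α (n+1) := by
    rw [s7P_succ]
    have h4 := s7P_pos hα (n+1)
    have h5 := s7fr_lt_one hα (n+1)
    nlinarith [s7fr_pos hα (n+1)]
  refine ⟨k, ?_, ?_⟩
  · rw [← s7Q_cast hα (n+1)]
    have hcast : ((s7Q α (n+1) : ℕ) : ℝ) ≤ ((s7Q α (n+2) : ℕ) : ℝ) := by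
      exact_mod_cast s7Q_mono hα (n+1)
    have : (k : ℝ) ≤ ((s7Q α (n+1) : ℕ) : ℝ) + ((s7Q α (n+2) : ℕ) : ℝ) := by exact_mod_cast hk
    linarith
  · have hfract : Int.fract (x + k*α) = x + k*α - m := by
      have : x + k*α - m = Int.fract (x + k*α - m) := (Int.fract_eq_self.2 ⟨h0, h1⟩).symm
      rw [this, Int.fract_sub_intCast]
    rw [hfract, ← s7Q_cast hα (n+1)]
    calc x + k*α - m ≤ s7P α (n+1) + s7P α (n+2) := h2.le
      _ ≤ 2 * s7P α (n+1) := by linarith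
      _ ≤ 2 * (1 / (s7Q α (n+2) : ℕ)) := by linarith
      _ = 2 / (s7Q α (n+2) : ℕ) := by ring


lemma s7_dens_ge_one (n : ℕ) : (1:ℝ) ≤ (GenContFract.of α).dens n := by
  rw [← s7Q_cast hα]; exact_mod_cast s7Q_one_le hα n

omit hα in
lemma s7_dens_mono : Monotone (fun n => (GenContFract.of α).dens n) :=
  monotone_nat_of_le_succ (fun _ => of_den_mono)

lemma s7_dens_growth (k : ℕ) : (2:ℝ)^k ≤ (GenContFract.of α).dens (2*k) := by
  rw [← s7Q_cast hα]
  have h := s7Q_growth hα k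
  exact_mod_cast h

lemma s7_dens_unbounded (C : ℝ) : ∃ N : ℕ, ∀ n ≥ N, C < (GenContFract.of α).dens n := by
  obtain ⟨k, hk⟩ := pow_unbounded_of_one_lt C (one_lt_two (α := ℝ))
  refine ⟨2*k, fun n hn => lt_of_lt_of_le hk ?_⟩
  exact le_trans (s7_dens_growth hα k) (s7_dens_mono hn)

omit hα in
lemma s7_iter {θ : ℝ → ℝ} (hθ : θ = fun x => Int.fract (x + α)) (x : ℝ)
    (hx : x ∈ Set.Ico (0:ℝ) 1) (n : ℕ) : θ^[n] x = Int.fract (x + n * α) := by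
  induction n with
  | zero =>
    simp only [Function.iterate_zero, id_eq, Nat.cast_zero, zero_mul, add_zero]
    exact (Int.fract_eq_self.2 ⟨hx.1, hx.2⟩).symm
  | succ n ih =>
    rw [Function.iterate_succ_apply', ih, hθ]
    show Int.fract (Int.fract (x + n*α) + α) = _
    have h2 : Int.fract (x + n*α) + α = (x + ((n:ℝ)+1)*α) + ((-⌊x+(n:ℝ)*α⌋ : ℤ) : ℝ) := by
      rw [Int.fract]; push_cast; ring
    rw [h2, Int.fract_add_intCast]
    norm_cast

omit hα in
lemma s7_ae_nonzero : ∀ᵐ x ∂(volume : Measure ℝ), ∀ k : ℕ, Int.fract (x + k*α) ≠ 0 := by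
  rw [ae_all_iff]
  intro k
  refine measure_mono_null (fun x hx => ?_)
    ((Set.countable_range (fun m : ℤ => (m:ℝ) - k*α)).measure_zero _)
  simp only [Set.mem_setOf_eq, not_not] at hx
  have hx' : Int.fract (x + k*α) = 0 := by simpa using hx
  refine ⟨⌊x + k*α⌋, ?_⟩
  unfold Int.fract at hx'
  simp only
  linarith [hx']

omit hα in
lemma s7_tsum_toReal {g : ℕ → ℝ} (hg : ∀ n, 0 ≤ g n) :
    ∑' n, g n = (∑' n, ENNReal.ofReal (g n)).toReal := by
  by_cases hs : Summable g
  · rw [← ENNReal.ofReal_tsum_of_nonneg hg hs, ENNReal.toReal_ofReal (tsum_nonneg hg)]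
  · rw [tsum_eq_zero_of_not_summable hs]
    have htop : ∑' n, ENNReal.ofReal (g n) = ⊤ := by
      by_contra hne
      exact hs ((ENNReal.summable_toReal hne).congr
        (fun n => ENNReal.toReal_ofReal (hg n)))
    rw [htop]; simp

lemma s7_part1 :
    IntegrableOn (fun x => ∑' n : ℕ, ((n:ℝ)+1)⁻¹^2 * (GenContFract.of α).dens (n+1) *
      (Set.Icc (0:ℝ) (2/(GenContFract.of α).dens (n+1))).indicator (fun _ => (1:ℝ)) x)
      (Set.Ico (0 : ℝ) 1) volume := by
  set d : ℕ → ℝ := fun n => (GenContFract.of α).dens n with hd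
  have hdpos : ∀ n, (0:ℝ) < d n := fun n => lt_of_lt_of_le one_pos (s7_dens_ge_one hα n)
  set T : ℕ → ℝ → ℝ := fun j x => ((j:ℝ)+1)⁻¹^2 * d (j+1) *
      (Set.Icc (0:ℝ) (2/d (j+1))).indicator (fun _ => (1:ℝ)) x with hT
  have hTnn : ∀ j x, 0 ≤ T j x := by
    intro j x
    apply mul_nonneg (mul_nonneg (by positivity) (hdpos (j+1)).le)
    exact Set.indicator_nonneg (fun _ _ => zero_le_one) x
  have hTmeas : ∀ j, Measurable (T j) := by
    intro j
    exact (Measurable.indicator measurable_const measurableSet_Icc).const_mul _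
  have hrepr : (fun x => ∑' j, T j x)
      = fun x => (∑' j, ENNReal.ofReal (T j x)).toReal := by
    funext x
    exact s7_tsum_toReal (fun j => hTnn j x)
  have hmeas : Measurable fun x => ∑' j, T j x := by
    rw [hrepr]
    exact (Measurable.ennreal_tsum
      (fun j => (hTmeas j).ennreal_ofReal)).ennreal_toReal
  constructor
  · exact hmeas.aestronglyMeasurable.restrict
  · rw [hasFiniteIntegral_iff_norm]
    have hnn : ∀ x, (0:ℝ) ≤ ∑' j, T j x := fun x => tsum_nonneg (fun j => hTnn j x)
    have hb1 : ∀ x, ENNReal.ofReal ‖∑' j, T j x‖ ≤ ∑' j, ENNReal.ofReal (T j x) := by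
      intro x
      rw [Real.norm_of_nonneg (hnn x), s7_tsum_toReal (fun j => hTnn j x)]
      exact ENNReal.ofReal_toReal_le
    calc ∫⁻ x in Set.Ico (0:ℝ) 1, ENNReal.ofReal ‖∑' j, T j x‖
        ≤ ∫⁻ x in Set.Ico (0:ℝ) 1, ∑' j, ENNReal.ofReal (T j x) := lintegral_mono hb1
      _ = ∑' j, ∫⁻ x in Set.Ico (0:ℝ) 1, ENNReal.ofReal (T j x) :=
          lintegral_tsum (fun j => (hTmeas j).ennreal_ofReal.aemeasurable)
      _ ≤ ∑' j : ℕ, ENNReal.ofReal (2 * ((j:ℝ)+1)⁻¹^2) := by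
          apply ENNReal.tsum_le_tsum
          intro j
          have hc : (0:ℝ) ≤ ((j:ℝ)+1)⁻¹^2 * d (j+1) :=
            mul_nonneg (by positivity) (hdpos _).le
          have heq : ∀ x : ℝ, ENNReal.ofReal (T j x) =
              ENNReal.ofReal (((j:ℝ)+1)⁻¹^2 * d (j+1)) *
                (Set.Icc (0:ℝ) (2/d (j+1))).indicator (fun _ => (1:ℝ≥0∞)) x := by
            intro x
            by_cases hmem : x ∈ Set.Icc (0:ℝ) (2/d (j+1))
            · simp [hT, Set.indicator_of_mem hmem]
            · simp [hT, Set.indicator_of_notMem hmem]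
          simp_rw [heq]
          rw [lintegral_const_mul _ (Measurable.indicator measurable_const measurableSet_Icc)]
          have hind : ∫⁻ x in Set.Ico (0:ℝ) 1,
              (Set.Icc (0:ℝ) (2/d (j+1))).indicator (fun _ => (1:ℝ≥0∞)) x
              ≤ ENNReal.ofReal (2/d (j+1)) := by
            rw [lintegral_indicator measurableSet_Icc, setLIntegral_one]
            calc (volume.restrict (Set.Ico (0:ℝ) 1)) (Set.Icc (0:ℝ) (2/d (j+1)))
                ≤ volume (Set.Icc (0:ℝ) (2/d (j+1))) := Measure.restrict_apply_le _ _
              _ = ENNReal.ofReal (2/d (j+1)) := by rw [Real.volume_Icc]; norm_num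
          calc ENNReal.ofReal (((j:ℝ)+1)⁻¹^2 * d (j+1)) *
              ∫⁻ x in Set.Ico (0:ℝ) 1,
                (Set.Icc (0:ℝ) (2/d (j+1))).indicator (fun _ => (1:ℝ≥0∞)) x
              ≤ ENNReal.ofReal (((j:ℝ)+1)⁻¹^2 * d (j+1)) * ENNReal.ofReal (2/d (j+1)) :=
                mul_le_mul_right hind _
            _ = ENNReal.ofReal (((j:ℝ)+1)⁻¹^2 * d (j+1) * (2/d (j+1))) :=
                (ENNReal.ofReal_mul hc).symm
            _ = ENNReal.ofReal (2 * ((j:ℝ)+1)⁻¹^2) := by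
                congr 1
                have hdd : d (j+1) * (2 / d (j+1)) = 2 := by
                  rw [mul_div_assoc']
                  exact mul_div_cancel_left₀ 2 (hdpos (j+1)).ne'
                calc ((j:ℝ)+1)⁻¹^2 * d (j+1) * (2/d (j+1))
                    = ((j:ℝ)+1)⁻¹^2 * (d (j+1) * (2/d (j+1))) := by ring
                  _ = 2 * ((j:ℝ)+1)⁻¹^2 := by rw [hdd]; ring
      _ < ⊤ := by
          have h1 : Summable (fun j : ℕ => ((j:ℝ)+1)⁻¹^2) := by
            have h2 := (summable_nat_add_iff (f := fun n : ℕ => (1:ℝ)/(n:ℝ)^2) 1).2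
              (Real.summable_one_div_nat_pow.2 one_lt_two)
            apply h2.congr
            intro j
            push_cast
            rw [one_div, inv_pow]
          have hsum : Summable (fun j : ℕ => 2 * ((j:ℝ)+1)⁻¹^2) := h1.mul_left 2
          rw [← ENNReal.ofReal_tsum_of_nonneg (fun j => by positivity) hsum]
          exact ENNReal.ofReal_lt_top


lemma s7_part2 (r : ℝ) (hr0 : 0 < r) (hr1 : r < 1) (x : ℝ)
    (hx : x ∈ Set.Ico (0:ℝ) 1) (hxk : ∀ k : ℕ, Int.fract (x + k*α) ≠ 0) :
    Filter.limsup (fun k : ℕ => ENNReal.ofReal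
      ((∑' n : ℕ, ((n:ℝ)+1)⁻¹^2 * (GenContFract.of α).dens (n+1) *
        (Set.Icc (0:ℝ) (2/(GenContFract.of α).dens (n+1))).indicator (fun _ => (1:ℝ))
          (Int.fract (x + k*α))) / (k:ℝ)^r)) atTop = ⊤ := by
  classical
  set d : ℕ → ℝ := fun n => (GenContFract.of α).dens n with hd
  have hdpos : ∀ n, (0:ℝ) < d n := fun n => lt_of_lt_of_le one_pos (s7_dens_ge_one hα n)
  set T : ℕ → ℝ → ℝ := fun j y => ((j:ℝ)+1)⁻¹^2 * d (j+1) *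
      (Set.Icc (0:ℝ) (2/d (j+1))).indicator (fun _ => (1:ℝ)) y with hT
  have hTnn : ∀ j y, 0 ≤ T j y := by
    intro j y
    apply mul_nonneg (mul_nonneg (by positivity) (hdpos (j+1)).le)
    exact Set.indicator_nonneg (fun _ _ => zero_le_one) y
  set H : ℝ → ℝ := fun y => ∑' j, T j y with hH
  -- main frequently claim
  have main : ∀ M : ℕ, ∃ᶠ k : ℕ in atTop,
      (M : ℝ≥0∞) ≤ ENNReal.ofReal (H (Int.fract (x + (k:ℕ)*α)) / (k:ℝ)^r) := by
    intro M
    rw [Filter.frequently_atTop]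
    intro N
    -- a uniform positive lower bound for the first N+1 orbit points
    obtain ⟨j₀, hj₀mem, hj₀min⟩ := (Finset.range (N+1)).exists_min_image
      (fun j => Int.fract (x + j*α)) ⟨0, Finset.mem_range.2 (Nat.succ_pos N)⟩
    set ε := Int.fract (x + j₀*α) with hε
    have hεpos : 0 < ε := (Int.fract_nonneg _).lt_of_ne (Ne.symm (hxk j₀))
    -- choose the scale m
    set ρ : ℝ := (2:ℝ)^(1-r) with hρ
    have hρ1 : (1:ℝ) < ρ := by
      rw [hρ]
      exact Real.one_lt_rpow_iff_of_pos (by norm_num) |>.2 (Or.inl ⟨by norm_num, by linarith⟩)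
    have hρpos : (0:ℝ) < ρ := lt_trans one_pos hρ1
    set C : ℝ := (M:ℝ) * (2:ℝ)^r * 4 + 1 with hC
    have h2rpos : (0:ℝ) < (2:ℝ)^r := Real.rpow_pos_of_pos (by norm_num) r
    have hCpos : 0 < C := by positivity
    have hgeo : Filter.Tendsto (fun m : ℕ => (m:ℝ)^2 * (ρ⁻¹)^m) atTop (nhds 0) := by
      have := summable_pow_mul_geometric_of_norm_lt_one 2
        (r := ρ⁻¹) (by rw [Real.norm_eq_abs, abs_of_pos (by positivity)]
                       exact inv_lt_one_of_one_lt₀ hρ1)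
      exact this.tendsto_atTop_zero
    have hev1 : ∀ᶠ m : ℕ in atTop, (m:ℝ)^2 * (ρ⁻¹)^m < 1/C :=
      hgeo.eventually_lt_const (by positivity)
    have hev2 : ∀ᶠ m : ℕ in atTop, 2/ε < (2:ℝ)^m :=
      (tendsto_pow_atTop_atTop_of_one_lt (by norm_num : (1:ℝ) < 2)).eventually_gt_atTop (2/ε)
    obtain ⟨m, hm1, hm2, hm3⟩ :
        ∃ m : ℕ, (m:ℝ)^2 * (ρ⁻¹)^m < 1/C ∧ 2/ε < (2:ℝ)^m ∧ 1 ≤ m := by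
      obtain ⟨m, hm⟩ := ((hev1.and hev2).and (eventually_ge_atTop 1)).exists
      exact ⟨m, hm.1.1, hm.1.2, hm.2⟩
    -- apply the key lemma at index 2m-1
    have h2m : 2*m - 1 + 1 = 2*m := by omega
    obtain ⟨k, hk_le, hk_fr⟩ := s7_key' hα (2*m-1) x hx.1 hx.2
    rw [h2m] at hk_le hk_fr
    set D : ℝ := d (2*m) with hD
    have hD1 : (1:ℝ) ≤ D := s7_dens_ge_one hα (2*m)
    have hDpos : (0:ℝ) < D := lt_of_lt_of_le one_pos hD1
    have hDge : (2:ℝ)^m ≤ D := by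
      have := s7_dens_growth hα m
      exact this
    set y := Int.fract (x + k*α) with hy
    have hy0 : 0 < y := (Int.fract_nonneg _).lt_of_ne (Ne.symm (hxk k))
    have hyD : y ≤ 2 / D := hk_fr
    -- k is large
    have hkN : N ≤ k := by
      by_contra hcon
      push_neg at hcon
      have h1 : ε ≤ y := hj₀min k (Finset.mem_range.2 (by omega))
      have h2 : 2 / D < ε := by
        rw [div_lt_iff₀ hDpos]
        calc (2:ℝ) = ε * (2/ε) := by field_simp
          _ < ε * (2:ℝ)^m := by
              exact mul_lt_mul_of_pos_left hm2 hεpos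
          _ ≤ ε * D := mul_le_mul_of_nonneg_left hDge hεpos.le
      linarith
    have hk1 : 1 ≤ k := by
      rcases Nat.eq_zero_or_pos k with h | h
      · exfalso
        have : Int.fract (x + (0:ℕ)*α) = x := by
          simp [Int.fract_eq_self.2 ⟨hx.1, hx.2⟩]
        have hx0 : y = x := by rw [hy, h]; simpa using this
        -- y ≤ 2/D < ε ≤ fract(x + j₀ α) and also x itself is one of the orbit points (j=0)
        have h1 : ε ≤ Int.fract (x + (0:ℕ)*α) := hj₀min 0 (Finset.mem_range.2 (Nat.succ_pos N))
        rw [this] at h1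
        have h2 : 2 / D < ε := by
          rw [div_lt_iff₀ hDpos]
          calc (2:ℝ) = ε * (2/ε) := by field_simp
            _ < ε * (2:ℝ)^m := mul_lt_mul_of_pos_left hm2 hεpos
            _ ≤ ε * D := mul_le_mul_of_nonneg_left hDge hεpos.le
        rw [hx0] at hyD
        linarith
      · exact h
    -- lower bound for H y
    have hHy : ((2*m:ℝ))⁻¹^2 * D ≤ H y := by
      obtain ⟨N₀, hN₀⟩ := s7_dens_unbounded hα (2/y)
      have hvanish : ∀ j ∉ Finset.range N₀, T j y = 0 := by
        intro j hj
        rw [Finset.mem_range, not_lt] at hj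
        have hdj : 2/y < d (j+1) := hN₀ (j+1) (by omega)
        have : 2 / d (j+1) < y := by
          rw [div_lt_iff₀ (hdpos (j+1))]
          calc (2:ℝ) = y * (2/y) := by field_simp
            _ < y * d (j+1) := mul_lt_mul_of_pos_left hdj hy0
        have hnot : y ∉ Set.Icc (0:ℝ) (2/d (j+1)) := by
          intro hmem
          exact absurd hmem.2 (not_le.2 this)
        rw [hT]
        simp [Set.indicator_of_notMem hnot]
      have hsum : Summable (fun j => T j y) := summable_of_ne_finset_zero hvanish
      have hle := Summable.le_tsum hsum (2*m-1) (fun j _ => hTnn j y)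
      have hyIcc : y ∈ Set.Icc (0:ℝ) (2/d (2*m)) := ⟨hy0.le, hyD⟩
      have hTval : T (2*m-1) y = ((2*m:ℝ))⁻¹^2 * D := by
        rw [hT]
        simp only
        rw [Set.indicator_of_mem]
        · have hcast : ((2*m-1:ℕ):ℝ) + 1 = 2*(m:ℝ) := by
            have h9 : ((2*m-1:ℕ):ℝ) = ((2*m:ℕ):ℝ) - 1 := by
              rw [Nat.cast_sub (show 1 ≤ 2*m by omega)]; norm_num
            rw [h9]; push_cast; ring
          rw [h2m, hcast]
          push_cast
          ring
        · rw [h2m]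
          exact hyIcc
      rw [← hTval]
      exact hle
    -- final numeric estimate
    refine ⟨k, hkN, ?_⟩
    have hkr_pos : (0:ℝ) < (k:ℝ)^r := Real.rpow_pos_of_pos (by exact_mod_cast hk1) r
    have hkr_le : (k:ℝ)^r ≤ (2*D)^r :=
      Real.rpow_le_rpow (by positivity) hk_le hr0.le
    have hHy0 : 0 ≤ H y := tsum_nonneg (fun j => hTnn j y)
    have hdiv : ((2*m:ℝ))⁻¹^2 * D / (2*D)^r ≤ H y / (k:ℝ)^r := by
      have h1 : ((2*m:ℝ))⁻¹^2 * D / (2*D)^r ≤ ((2*m:ℝ))⁻¹^2 * D / (k:ℝ)^r :=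
        div_le_div_of_nonneg_left (by positivity) hkr_pos hkr_le
      have h2 : ((2*m:ℝ))⁻¹^2 * D / (k:ℝ)^r ≤ H y / (k:ℝ)^r :=
        (div_le_div_iff_of_pos_right hkr_pos).2 hHy
      linarith
    have hMle : (M:ℝ) ≤ ((2*m:ℝ))⁻¹^2 * D / (2*D)^r := by
      -- rewrite (2D)^r = 2^r * D^r and use D^(1-r) ≥ ρ^m ≥ C m²
      have hsplit : (2*D)^r = (2:ℝ)^r * D^r := Real.mul_rpow (by norm_num) hDpos.le
      have hDr_pos : (0:ℝ) < D^r := Real.rpow_pos_of_pos hDpos r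
      have hDfact : D^r * D^(1-r) = D := by
        rw [← Real.rpow_add hDpos]
        norm_num
      have hρm : ρ^m ≤ D^(1-r) := by
        have h1 : ((2:ℝ)^m)^(1-r) ≤ D^(1-r) :=
          Real.rpow_le_rpow (by positivity) hDge (by linarith)
        have h2 : ((2:ℝ)^m)^(1-r) = ρ^m := by
          rw [hρ, ← Real.rpow_natCast 2 m, ← Real.rpow_mul (by norm_num),
            mul_comm, Real.rpow_mul (by norm_num), Real.rpow_natCast]
        linarith [h2 ▸ h1]
      have hCm : C * (m:ℝ)^2 ≤ ρ^m := by
        have hρmpos : (0:ℝ) < ρ^m := by positivity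
        have h3 : (m:ℝ)^2 * (ρ^m)⁻¹ < 1/C := by rwa [← inv_pow]
        have h4 := mul_lt_mul_of_pos_right h3 (mul_pos hCpos hρmpos)
        have h5 : (m:ℝ)^2 * (ρ^m)⁻¹ * (C * ρ^m) = C * (m:ℝ)^2 := by
          field_simp
        have h6 : 1/C * (C * ρ^m) = ρ^m := by field_simp
        rw [h5, h6] at h4
        exact h4.le
      -- combine
      have hm_pos : (0:ℝ) < (m:ℝ) := by exact_mod_cast hm3
      have hkey : (M:ℝ) * ((2:ℝ)^r * D^r) ≤ ((2*m:ℝ))⁻¹^2 * D := by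
        have e1 : ((2*m:ℝ))⁻¹^2 * D = D^r * (((2*m:ℝ))⁻¹^2 * D^(1-r)) := by
          rw [show D^r * (((2*m:ℝ))⁻¹^2 * D^(1-r))
              = ((2*m:ℝ))⁻¹^2 * (D^r * D^(1-r)) from by ring, hDfact]
        have e2 : (M:ℝ) * (2:ℝ)^r * 4 * (m:ℝ)^2 ≤ D^(1-r) := by
          calc (M:ℝ) * (2:ℝ)^r * 4 * (m:ℝ)^2 ≤ C * (m:ℝ)^2 := by
                rw [hC]; nlinarith [sq_nonneg (m:ℝ)]
            _ ≤ ρ^m := hCm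
            _ ≤ D^(1-r) := hρm
        have e3 : ((2*m:ℝ))⁻¹^2 * ((M:ℝ) * (2:ℝ)^r * 4 * (m:ℝ)^2) = (M:ℝ) * (2:ℝ)^r := by
          rw [mul_inv, mul_pow]
          field_simp
          ring
        calc (M:ℝ) * ((2:ℝ)^r * D^r) = D^r * ((M:ℝ) * (2:ℝ)^r) := by ring
          _ = D^r * (((2*m:ℝ))⁻¹^2 * ((M:ℝ) * (2:ℝ)^r * 4 * (m:ℝ)^2)) := by rw [e3]
          _ ≤ D^r * (((2*m:ℝ))⁻¹^2 * D^(1-r)) := by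
              apply mul_le_mul_of_nonneg_left _ hDr_pos.le
              exact mul_le_mul_of_nonneg_left e2 (by positivity)
          _ = ((2*m:ℝ))⁻¹^2 * D := e1.symm
      rw [hsplit, le_div_iff₀ (by positivity)]
      linarith [hkey]
    rw [← ENNReal.ofReal_natCast M]
    exact ENNReal.ofReal_le_ofReal (le_trans hMle hdiv)
  -- conclude limsup = ⊤
  by_contra hne
  obtain ⟨M, hM⟩ := ENNReal.exists_nat_gt hne
  exact absurd (Filter.le_limsup_of_frequently_le' (main M)) (not_le.2 hM)

end CF

/-- For an irrational `α` with continued fraction denominators `q_n`, the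
function `h = ∑_{n≥1} n⁻² q_n 1_{[0,2/q_n]}` is integrable on `[0,1)`, and for the
rotation `θ x = x + α (mod 1)` and every `0 < r < 1`, `limsup_n h(θ^[n] x)/n^r = ∞` a.e. -/
theorem stmt7 (α : ℝ) (hα : Irrational α)
    (q : ℕ → ℝ) (hq : ∀ n, q n = (GenContFract.of α).dens n)
    (θ : ℝ → ℝ) (hθ : θ = fun x => Int.fract (x + α))
    (h : ℝ → ℝ)
    (hh : h = fun x => ∑' n : ℕ,
      ((n + 1 : ℝ))⁻¹ ^ 2 * q (n + 1) *
        Set.indicator (Set.Icc (0 : ℝ) (2 / q (n + 1))) (fun _ => (1 : ℝ)) x) :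
    IntegrableOn h (Set.Ico (0 : ℝ) 1) volume ∧
    ∀ r : ℝ, 0 < r → r < 1 →
      ∀ᵐ x ∂(volume.restrict (Set.Ico (0 : ℝ) 1)),
        Filter.limsup
          (fun n : ℕ => ENNReal.ofReal (h (θ^[n] x) / (n : ℝ) ^ r)) atTop = ⊤ := by
  constructor
  · rw [hh]
    simp only [hq]
    exact s7_part1 hα
  · intro r hr0 hr1
    have h1 : ∀ᵐ x ∂(volume.restrict (Set.Ico (0:ℝ) 1)), x ∈ Set.Ico (0:ℝ) 1 :=
      ae_restrict_mem measurableSet_Ico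
    have h2 : ∀ᵐ x ∂(volume.restrict (Set.Ico (0:ℝ) 1)),
        ∀ k : ℕ, Int.fract (x + k*α) ≠ 0 :=
      ae_restrict_of_ae (s7_ae_nonzero (α := α))
    filter_upwards [h1, h2] with x hx hxk
    have hEq : (fun n : ℕ => ENNReal.ofReal (h (θ^[n] x) / (n:ℝ)^r))
        = fun k : ℕ => ENNReal.ofReal
          ((∑' n : ℕ, ((n:ℝ)+1)⁻¹^2 * (GenContFract.of α).dens (n+1) *
            (Set.Icc (0:ℝ) (2/(GenContFract.of α).dens (n+1))).indicator (fun _ => (1:ℝ))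
              (Int.fract (x + k*α))) / (k:ℝ)^r) := by
      funext n
      rw [s7_iter hθ x hx n, hh]
      simp only [hq]
    rw [hEq]
    exact s7_part2 hα r hr0 hr1 x hx hxk
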